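/- Let p be a prime with p ≡ 1 (mod 4), let e be an odd positive integer, and set n = p^e. Then the discriminant of F_n(x) is not the square of a rational number. -/

import Mathlib

open Polynomial BigOperators

/-- `F n` is the truncated logarithmic polynomial `1 + x + x²/2 + ⋯ + xⁿ/n ∈ ℚ[x]`. -/
noncomputable def F (n : ℕ) : Polynomial ℚ :=
  1 + ∑ k ∈ Finset.Icc 1 n, Polynomial.C ((k : ℚ)⁻¹) * Polynomial.X ^ k

/-- `Ln n = lcm {1, 2, …, n}`. -/
def Ln (n : ℕ) : ℕ := (Finset.Icc 1 n).lcm id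

/-- `Ftilde n = Ln n • F n`, a polynomial with integer coefficients. -/
noncomputable def Ftilde (n : ℕ) : Polynomial ℚ := Polynomial.C ((Ln n : ℚ)) * F n

/-- The resultant `Res(P, Q)` of two polynomials over `ℚ`, computed in `ℂ` via the
product formula `Res(P,Q) = lc(P)^(deg Q) * ∏_{P(r)=0} Q(r)` (roots with multiplicity). -/
noncomputable def resC (P Q : Polynomial ℚ) : ℂ :=
  ((P.leadingCoeff : ℂ)) ^ Q.natDegree *
    ((P.map (algebraMap ℚ ℂ)).roots.map (fun r => (Q.map (algebraMap ℚ ℂ)).eval r)).prod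

/-- The discriminant `disc P = (−1)^(n(n−1)/2) ⬝ a_n⁻¹ ⬝ Res(P, P′)`, as a complex number. -/
noncomputable def discC (P : Polynomial ℚ) : ℂ :=
  (-1) ^ (P.natDegree.choose 2) * ((P.leadingCoeff : ℂ))⁻¹ * resC P (Polynomial.derivative P)

/-- `𝒫 n = ∏_θ F̃_n(θ)`, the product over the nontrivial `n`-th roots of unity in `ℂ`. -/
noncomputable def P (n : ℕ) : ℂ :=
  ∏ θ ∈ (Polynomial.nthRootsFinset n (1 : ℂ)).erase 1, (Polynomial.aeval θ) (Ftilde n)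

/-- `Xc m ω = ∏_{k=1}^{m−1} (1/m + ω^k + ω^{2k}/2 + ⋯ + ω^{(m−1)k}/(m−1))`. -/
noncomputable def Xc (m : ℕ) (ω : ℂ) : ℂ :=
  ∏ k ∈ Finset.Icc 1 (m - 1), ((m : ℂ)⁻¹ + ∑ j ∈ Finset.Icc 1 (m - 1), ω ^ (j * k) / (j : ℂ))

/-- `Y m = 1 + 1/2 + ⋯ + 1/m ∈ ℚ`. -/
def Y (m : ℕ) : ℚ := ∑ j ∈ Finset.Icc 1 m, (j : ℚ)⁻¹


lemma F_deriv (n : ℕ) : derivative (F n) = ∑ i ∈ Finset.range n, (X:ℚ[X]) ^ i := by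
  unfold F
  rw [derivative_add, derivative_one, zero_add, derivative_sum]
  have h1 : ∀ k ∈ Finset.Icc 1 n, derivative (C ((k:ℚ)⁻¹) * X ^ k) = (X:ℚ[X]) ^ (k-1) := by
    intro k hk
    simp only [Finset.mem_Icc] at hk
    rw [derivative_C_mul, derivative_X_pow, ← mul_assoc, ← C_mul,
      inv_mul_cancel₀ (by exact_mod_cast Nat.cast_ne_zero.2 (by omega) : (k:ℚ) ≠ 0), C_1, one_mul]
  rw [Finset.sum_congr rfl h1]
  have h2 : Finset.Icc 1 n = Finset.Ico 1 (n+1) := by rw [Finset.Ico_add_one_right_eq_Icc]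
  rw [h2, Finset.sum_Ico_eq_sum_range]
  simp

lemma F_coeff_of_pos (n m : ℕ) (hm : 1 ≤ m) :
    (F n).coeff m = if m ≤ n then (m:ℚ)⁻¹ else 0 := by
  unfold F
  rw [coeff_add]
  have h1 : (1:ℚ[X]).coeff m = 0 := by
    rw [← C_1, coeff_C]; simp; omega
  rw [h1, zero_add, finset_sum_coeff]
  simp only [coeff_C_mul, coeff_X_pow, mul_ite, mul_one, mul_zero]
  have h2 : ∀ x ∈ Finset.Icc 1 n, (if m = x then ((x:ℚ))⁻¹ else 0) =
      (if x = m then ((m:ℚ))⁻¹ else 0) := by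
    intro x _
    rcases eq_or_ne x m with rfl | h
    · simp
    · simp [h, Ne.symm h]
  rw [Finset.sum_congr rfl h2, Finset.sum_ite_eq' (Finset.Icc 1 n) m (fun _ => (m:ℚ)⁻¹)]
  simp [Finset.mem_Icc, hm]

lemma F_natDegree (n : ℕ) (hn : 1 ≤ n) : (F n).natDegree = n := by
  have hle : (F n).natDegree ≤ n := by
    apply natDegree_le_iff_degree_le.2
    unfold F
    apply le_trans (degree_add_le _ _)
    apply max_le
    · exact le_trans degree_one_le (by exact_mod_cast Nat.cast_nonneg' n)
    · apply le_trans (degree_sum_le _ _)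
      apply Finset.sup_le
      intro k hk
      simp only [Finset.mem_Icc] at hk
      exact le_trans (degree_C_mul_X_pow_le k _) (by exact_mod_cast hk.2)
  have hne : (F n).coeff n ≠ 0 := by
    rw [F_coeff_of_pos n n hn, if_pos le_rfl]
    simp; omega
  exact le_antisymm hle (le_natDegree_of_ne_zero hne)

lemma F_leadingCoeff (n : ℕ) (hn : 1 ≤ n) : (F n).leadingCoeff = (n:ℚ)⁻¹ := by
  rw [leadingCoeff, F_natDegree n hn, F_coeff_of_pos n n hn, if_pos le_rfl]


lemma prod_map_swap (s t : Multiset ℂ) (f : ℂ → ℂ → ℂ) :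
    (s.map (fun a => (t.map (f a)).prod)).prod
      = (t.map (fun b => (s.map (fun a => f a b)).prod)).prod := by
  induction s using Multiset.induction with
  | empty => simp
  | cons a s ih =>
      simp only [Multiset.map_cons, Multiset.prod_cons, ih, ← Multiset.prod_map_mul]

lemma resC_eval (P Q : Polynomial ℚ) :
    resC P Q = ((P.leadingCoeff : ℂ)) ^ Q.natDegree * ((Q.leadingCoeff : ℂ)) ^ P.natDegree *
      ((P.map (algebraMap ℚ ℂ)).roots.map (fun a =>
        (((Q.map (algebraMap ℚ ℂ)).roots.map (fun b => a - b)).prod))).prod := by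
  unfold resC
  have hQs : Splits (Q.map (algebraMap ℚ ℂ)) := IsAlgClosed.splits _
  have hQ := hQs.eq_prod_roots
  rw [leadingCoeff_map] at hQ
  have heval : ∀ a : ℂ, (Q.map (algebraMap ℚ ℂ)).eval a =
      (Q.leadingCoeff : ℂ) * (((Q.map (algebraMap ℚ ℂ)).roots.map (fun b => a - b)).prod) := by
    intro a
    conv_lhs => rw [hQ]
    rw [eval_mul, eval_C, eval_multiset_prod, Multiset.map_map]
    simp only [Function.comp, eval_sub, eval_X, eval_C]
    rfl
  rw [Multiset.map_congr rfl (fun a _ => heval a), Multiset.prod_map_mul]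
  have hcard : Multiset.card (P.map (algebraMap ℚ ℂ)).roots = P.natDegree :=
    ((IsAlgClosed.splits (P.map (algebraMap ℚ ℂ))).natDegree_eq_card_roots).symm.trans (natDegree_map _)
  rw [Multiset.map_const', Multiset.prod_replicate, hcard]
  ring

lemma resC_swap (P Q : Polynomial ℚ) :
    resC P Q = (-1) ^ (P.natDegree * Q.natDegree) * resC Q P := by
  rw [resC_eval P Q, resC_eval Q P]
  have hcardP : Multiset.card (P.map (algebraMap ℚ ℂ)).roots = P.natDegree :=
    ((IsAlgClosed.splits (P.map (algebraMap ℚ ℂ))).natDegree_eq_card_roots).symm.trans (natDegree_map _)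
  have hcardQ : Multiset.card (Q.map (algebraMap ℚ ℂ)).roots = Q.natDegree :=
    ((IsAlgClosed.splits (Q.map (algebraMap ℚ ℂ))).natDegree_eq_card_roots).symm.trans (natDegree_map _)
  set s := (P.map (algebraMap ℚ ℂ)).roots
  set t := (Q.map (algebraMap ℚ ℂ)).roots
  have key : (s.map (fun a => (t.map (fun b => a - b)).prod)).prod
      = (-1) ^ (P.natDegree * Q.natDegree) *
        (t.map (fun b => (s.map (fun a => b - a)).prod)).prod := by
    have h1 : ∀ a : ℂ, (t.map (fun b => a - b)).prod
        = (-1) ^ Q.natDegree * (t.map (fun b => b - a)).prod := by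
      intro a
      have : (t.map (fun b => a - b)) = (t.map (fun b => b - a)).map Neg.neg := by
        rw [Multiset.map_map]; apply Multiset.map_congr rfl; intro b _; simp
      rw [this, Multiset.prod_map_neg, Multiset.card_map, hcardQ]
    rw [Multiset.map_congr rfl (fun a _ => h1 a), Multiset.prod_map_mul,
      Multiset.map_const', Multiset.prod_replicate, hcardP, ← pow_mul,
      prod_map_swap s t (fun a b => b - a), Nat.mul_comm Q.natDegree P.natDegree]
  rw [key]
  ring

noncomputable def Psi (n : ℕ) : ℚ[X] := ∑ i ∈ Finset.range n, (X:ℚ[X]) ^ i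

lemma Psi_monic (n : ℕ) (hn : 3 ≤ n) : (Psi n).Monic := monic_geom_sum_X (by omega : n ≠ 0)

lemma Psi_mul (n : ℕ) : (Psi n) * (X - 1) = X ^ n - 1 := geom_sum_mul X n

lemma Psi_natDegree (n : ℕ) (hn : 3 ≤ n) : (Psi n).natDegree = n - 1 := by
  have h1 : (Psi n * (X - 1)).natDegree = (Psi n).natDegree + 1 := by
    have hx : (X - 1 : ℚ[X]) = X - C 1 := by rw [C_1]
    rw [hx, natDegree_mul (Psi_monic n hn).ne_zero (X_sub_C_ne_zero 1), natDegree_X_sub_C]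
  have h2 : ((X:ℚ[X]) ^ n - 1).natDegree = n := by
    rw [← C_1, natDegree_X_pow_sub_C]
  rw [Psi_mul, h2] at h1
  omega

lemma Psi_map_roots_pow (n : ℕ) (hn : 3 ≤ n) (ζ : ℂ) (hζ : ζ ∈ ((Psi n).map (algebraMap ℚ ℂ)).roots) :
    ζ ^ n = 1 := by
  have hne : ((Psi n).map (algebraMap ℚ ℂ)) ≠ 0 :=
    (Polynomial.map_monic_ne_zero (Psi_monic n hn))
  have heval : eval ζ ((Psi n).map (algebraMap ℚ ℂ)) = 0 := (mem_roots hne).1 hζ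
  have hmap : ((Psi n).map (algebraMap ℚ ℂ)) = ∑ i ∈ Finset.range n, (X:ℂ[X]) ^ i := by
    unfold Psi
    rw [Polynomial.map_sum]
    simp
  rw [hmap] at heval
  have : (∑ i ∈ Finset.range n, ζ ^ i) = 0 := by
    rw [← heval]; simp [eval_finset_sum]
  have h2 := geom_sum_mul ζ n
  rw [this, zero_mul] at h2
  have := h2.symm
  rwa [sub_eq_zero] at this

lemma Psi_roots_card (n : ℕ) (hn : 3 ≤ n) : Multiset.card ((Psi n).map (algebraMap ℚ ℂ)).roots = n - 1 := by
  rw [← (IsAlgClosed.splits ((Psi n).map (algebraMap ℚ ℂ))).natDegree_eq_card_roots, natDegree_map, Psi_natDegree n hn]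

lemma discC_eq (n : ℕ) (hn : 3 ≤ n) (hodd : Odd n) (hn4 : n % 4 = 1) :
    discC (F n) = (n:ℂ) *
      (((Psi n).map (algebraMap ℚ ℂ)).roots.map
          (fun ζ => eval ζ ((F n).map (algebraMap ℚ ℂ)))).prod := by
  unfold discC
  rw [F_natDegree n (by omega), F_leadingCoeff n (by omega)]
  have hsign : ((-1 : ℂ)) ^ (n.choose 2) = 1 := by
    apply Even.neg_one_pow
    obtain ⟨m, hm⟩ : ∃ m, n = 4*m+1 := ⟨n/4, by omega⟩
    rw [Nat.choose_two_right, hm]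
    have h4 : (4*m+1) * (4*m+1-1) = 4*((4*m+1)*m) := by
      simp only [Nat.add_sub_cancel]; ring
    rw [h4]
    refine ⟨(4*m+1)*m, by omega⟩
  have hderiv : derivative (F n) = Psi n := F_deriv n
  rw [hderiv, hsign, one_mul]
  rw [resC_swap (F n) (Psi n)]
  have heven : Even ((F n).natDegree * (Psi n).natDegree) := by
    rw [F_natDegree n (by omega), Psi_natDegree n hn]
    obtain ⟨k, hk⟩ := hodd
    have h1 : n - 1 = 2*k := by omega
    rw [h1, hk]
    exact ⟨(2*k+1)*k, by ring⟩
  rw [heven.neg_one_pow, one_mul]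
  unfold resC
  rw [(Psi_monic n hn).leadingCoeff, F_natDegree n (by omega)]
  push_cast
  rw [one_pow, one_mul]
  rw [inv_inv]

lemma key_dvd (p e n k : ℕ) (hp : p.Prime) (he : 0 < e) (hn : n = p ^ e)
    (hk1 : 1 ≤ k) (hkn : k < n) :
    p * k ∣ n * (ordCompl[p] (Nat.factorial n)) := by
  set a := k.factorization p with ha
  set k' := ordCompl[p] k with hk'
  have hk0 : k ≠ 0 := by omega
  have hfac : p ^ a * k' = k := Nat.ordProj_mul_ordCompl_eq_self k p
  have hae : a + 1 ≤ e := by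
    by_contra h
    have h1 : p ^ e ∣ k := dvd_trans (pow_dvd_pow p (by omega)) (Nat.ordProj_dvd k p)
    have := Nat.le_of_dvd (by omega) h1
    omega
  have hpk' : ¬ p ∣ k' := Nat.not_dvd_ordCompl hp hk0
  have hcop : Nat.Coprime k' p := ((Nat.Prime.coprime_iff_not_dvd hp).2 hpk').symm
  have hkdvd : k' ∣ Nat.factorial n := by
    have h2 : k' ∣ k := Dvd.intro_left _ hfac
    exact dvd_trans h2 (Nat.dvd_factorial (by omega) (by omega))
  have hk'L : k' ∣ ordCompl[p] (Nat.factorial n) := by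
    have h3 : Nat.factorial n = p ^ ((Nat.factorial n).factorization p) * ordCompl[p] (Nat.factorial n) :=
      (Nat.ordProj_mul_ordCompl_eq_self (Nat.factorial n) p).symm
    rw [h3] at hkdvd
    exact (Nat.Coprime.pow_right _ hcop).dvd_of_dvd_mul_left hkdvd
  have hpow : p ^ (a + 1) ∣ n := by rw [hn]; exact pow_dvd_pow p hae
  have : p * k = p ^ (a+1) * k' := by rw [← hfac]; ring
  rw [this]
  exact mul_dvd_mul hpow hk'L

-- roots of unity are algebraic integers
lemma rootOfUnity_isIntegral (n : ℕ) (hn : 0 < n) (ζ : ℂ) (hζ : ζ ^ n = 1) :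
    ζ ∈ integralClosure ℤ ℂ := by
  refine ⟨X ^ n - C 1, monic_X_pow_sub_C 1 (by omega), ?_⟩
  simp [hζ]

-- the key factor identity
lemma factor_eq (p e n : ℕ) (hp : p.Prime) (he : 0 < e) (hn : n = p ^ e)
    (ζ : ℂ) (hζ : ζ ^ n = 1) :
    ∃ T ∈ integralClosure ℤ ℂ,
      (((ordCompl[p] (Nat.factorial n) : ℕ) : ℂ) * (n:ℂ)) * eval ζ ((F n).map (algebraMap ℚ ℂ))
        = ((ordCompl[p] (Nat.factorial n) : ℕ) : ℂ) + (p:ℂ) * T := by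
  set L' : ℕ := ordCompl[p] (Nat.factorial n) with hL'
  have hn1 : 1 ≤ n := by rw [hn]; exact Nat.one_le_pow _ _ hp.pos
  have hp0 : (p:ℂ) ≠ 0 := by exact_mod_cast hp.pos.ne'
  -- evaluate F
  have hF : eval ζ ((F n).map (algebraMap ℚ ℂ)) =
      1 + ∑ k ∈ Finset.Icc 1 n, (k:ℂ)⁻¹ * ζ ^ k := by
    unfold F
    rw [Polynomial.map_add, Polynomial.map_one, Polynomial.map_sum]
    rw [eval_add, eval_one, eval_finset_sum]
    congr 1
    apply Finset.sum_congr rfl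
    intro k hk
    rw [Polynomial.map_mul, Polynomial.map_C, Polynomial.map_pow, Polynomial.map_X,
      eval_mul, eval_C, eval_pow, eval_X, eq_ratCast]
    push_cast
    ring
  -- separate the top term
  have hsplit : ∑ k ∈ Finset.Icc 1 n, (k:ℂ)⁻¹ * ζ ^ k
      = (∑ k ∈ Finset.Icc 1 (n-1), (k:ℂ)⁻¹ * ζ ^ k) + (n:ℂ)⁻¹ := by
    have h1 : n = (n-1) + 1 := by omega
    rw [h1, Finset.sum_Icc_succ_top (by omega : 1 ≤ n - 1 + 1)]
    rw [← h1, hζ, mul_one]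
  -- the individual coefficients
  refine ⟨(p^(e-1)*L' : ℕ) + ∑ k ∈ Finset.Icc 1 (n-1), ((n * L' / (p * k) : ℕ) : ℂ) * ζ ^ k,
    ?_, ?_⟩
  · -- membership in the integral closure
    apply Subalgebra.add_mem
    · exact Subalgebra.natCast_mem _ _
    · apply Subalgebra.sum_mem
      intro k hk
      exact Subalgebra.mul_mem _ (Subalgebra.natCast_mem _ _)
        (Subalgebra.pow_mem _ (rootOfUnity_isIntegral n (by omega) ζ hζ) k)
  · rw [hF, hsplit]
    rw [mul_add, mul_add]
    have hnn : (n:ℂ) ≠ 0 := by exact_mod_cast (by omega : n ≠ 0)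
    have hLn : ((L':ℂ) * n) * (n:ℂ)⁻¹ = (L':ℂ) := by
      rw [mul_assoc, mul_inv_cancel₀ hnn, mul_one]
    rw [mul_one]
    have hterm : ∀ k ∈ Finset.Icc 1 (n-1),
        ((L':ℂ) * n) * ((k:ℂ)⁻¹ * ζ ^ k) = (p:ℂ) * (((n * L' / (p * k) : ℕ) : ℂ) * ζ ^ k) := by
      intro k hk
      simp only [Finset.mem_Icc] at hk
      have hdvd : p * k ∣ n * L' := key_dvd p e n k hp he hn hk.1 (by omega)
      have hk0 : (k:ℂ) ≠ 0 := by exact_mod_cast (by omega : k ≠ 0)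
      obtain ⟨m, hm⟩ := hdvd
      have hq : (n * L' / (p * k) : ℕ) = m := by
        rw [hm]; exact Nat.mul_div_cancel_left m (Nat.mul_pos hp.pos (by omega))
      rw [hq]
      have hcast : ((n:ℂ) * L') = (p:ℂ) * k * m := by exact_mod_cast congrArg (Nat.cast : ℕ → ℂ) hm
      calc ((L':ℂ) * n) * ((k:ℂ)⁻¹ * ζ ^ k) = (((n:ℂ) * L') * (k:ℂ)⁻¹) * ζ ^ k := by ring
        _ = (((p:ℂ) * k * m) * (k:ℂ)⁻¹) * ζ ^ k := by rw [hcast]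
        _ = ((p:ℂ) * m * ((k:ℂ) * (k:ℂ)⁻¹)) * ζ ^ k := by ring
        _ = (p:ℂ) * (((m:ℕ):ℂ) * ζ ^ k) := by rw [mul_inv_cancel₀ hk0]; ring
    rw [Finset.mul_sum, Finset.sum_congr rfl hterm, hLn]
    have hnpe : ((L':ℂ) * n) = (p:ℂ) * ((p^(e-1)*L' : ℕ) : ℂ) := by
      push_cast
      rw [hn]
      push_cast
      rw [show (p:ℂ) ^ e = (p:ℂ) * (p:ℂ)^(e-1) from by
        conv_lhs => rw [(by omega : e = 1 + (e-1))]
        rw [pow_add, pow_one]]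
      ring
    rw [hnpe, ← Finset.mul_sum]
    push_cast
    ring

-- product of elements of the form c + p*t
lemma prod_form (c q : ℂ) (hc : c ∈ integralClosure ℤ ℂ) (hq : q ∈ integralClosure ℤ ℂ)
    (s : Multiset ℂ) (h : ∀ x ∈ s, ∃ t ∈ integralClosure ℤ ℂ, x = c + q * t) :
    ∃ T ∈ integralClosure ℤ ℂ, s.prod = c ^ (Multiset.card s) + q * T := by
  induction s using Multiset.induction with
  | empty => exact ⟨0, Subalgebra.zero_mem _, by simp⟩
  | cons a s ih =>
      obtain ⟨T, hT, hprod⟩ := ih (fun x hx => h x (Multiset.mem_cons_of_mem hx))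
      obtain ⟨t, ht, ha⟩ := h a (Multiset.mem_cons_self a s)
      refine ⟨t * c ^ (Multiset.card s) + c * T + q * t * T, ?_, ?_⟩
      · apply Subalgebra.add_mem
        apply Subalgebra.add_mem
        · exact Subalgebra.mul_mem _ ht (Subalgebra.pow_mem _ hc _)
        · exact Subalgebra.mul_mem _ hc hT
        · exact Subalgebra.mul_mem _ (Subalgebra.mul_mem _ hq ht) hT
      · rw [Multiset.prod_cons, hprod, ha, Multiset.card_cons, pow_succ]
        ring

-- a rational number that is an algebraic integer is an integer
lemma rat_algInt (x : ℚ) (hx : ((x:ℂ)) ∈ integralClosure ℤ ℂ) : ∃ z : ℤ, (z:ℚ) = x := by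
  have h1 : IsIntegral ℤ ((x:ℂ)) := hx
  have h2 : IsIntegral ℤ x := by
    have : algebraMap ℚ ℂ x = (x:ℂ) := by norm_cast
    rw [← this] at h1
    exact (isIntegral_algebraMap_iff (algebraMap ℚ ℂ).injective).1 h1
  exact IsIntegrallyClosed.isIntegral_iff.1 h2

/-- If `p ≡ 1 (mod 4)` is prime, `e` is an odd positive integer and `n = p^e`,
then `disc(F n)` is not a rational square. -/
theorem stmt6 (p e n : ℕ) (hp : p.Prime) (hp4 : p % 4 = 1) (he : 0 < e) (heo : Odd e)
    (hn : n = p ^ e) :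
    ¬ ∃ r : ℚ, (r : ℂ) ^ 2 = discC (F n) := by
  rintro ⟨r, hr⟩
  have hp5 : 5 ≤ p := by have := hp.two_le; omega
  have hn5 : 5 ≤ n := le_trans hp5 (by rw [hn]; exact Nat.le_self_pow he.ne' p)
  have hoddp : Odd p := hp.odd_of_ne_two (by omega)
  have hodd : Odd n := by rw [hn]; exact hoddp.pow
  have hn4 : n % 4 = 1 := by rw [hn, Nat.pow_mod, hp4, one_pow, Nat.one_mod_eq_one.mpr (by omega)]
  have hdisc := discC_eq n (by omega) hodd hn4
  rw [← hr] at hdisc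
  set L' : ℕ := ordCompl[p] (Nat.factorial n) with hL'
  have hL'p : ¬ p ∣ L' := Nat.not_dvd_ordCompl hp (Nat.factorial_ne_zero n)
  have hL'0 : L' ≠ 0 := (Nat.ordCompl_pos p (Nat.factorial_ne_zero n)).ne'
  set R := ((Psi n).map (algebraMap ℚ ℂ)).roots with hR
  set Fc := (F n).map (algebraMap ℚ ℂ) with hFc
  have hcard : Multiset.card R = n - 1 := Psi_roots_card n (by omega)
  -- the big product
  have hM : ∃ T ∈ integralClosure ℤ ℂ,
      (R.map (fun ζ => ((L':ℕ):ℂ) * (n:ℂ) * eval ζ Fc)).prod = ((L':ℕ):ℂ) ^ (n-1) + (p:ℂ) * T := by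
    have hall : ∀ x ∈ R.map (fun ζ => ((L':ℕ):ℂ) * (n:ℂ) * eval ζ Fc),
        ∃ t ∈ integralClosure ℤ ℂ, x = ((L':ℕ):ℂ) + ((p:ℕ):ℂ) * t := by
      intro x hx
      obtain ⟨ζ, hζR, hζx⟩ := Multiset.mem_map.1 hx
      obtain ⟨T', hT', hT'e⟩ := factor_eq p e n hp he hn ζ (Psi_map_roots_pow n (by omega) ζ hζR)
      exact ⟨T', hT', by rw [← hζx, ← hT'e]⟩
    obtain ⟨T, hT, hTe⟩ := prod_form ((L':ℕ):ℂ) ((p:ℕ):ℂ)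
      (Subalgebra.natCast_mem _ _) (Subalgebra.natCast_mem _ _)
      (R.map (fun ζ => ((L':ℕ):ℂ) * (n:ℂ) * eval ζ Fc)) hall
    refine ⟨T, hT, ?_⟩
    rw [hTe, Multiset.card_map, hcard]
  obtain ⟨T, hT, hTe⟩ := hM
  -- relate to the discriminant
  have hprod : (R.map (fun ζ => ((L':ℕ):ℂ) * (n:ℂ) * eval ζ Fc)).prod
      = (((L':ℕ):ℂ) * (n:ℂ)) ^ (n-1) * (R.map (fun ζ => eval ζ Fc)).prod := by
    have h0 : (fun ζ => ((L':ℕ):ℂ) * (n:ℂ) * eval ζ Fc)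
        = fun ζ => (fun _ => ((L':ℕ):ℂ) * (n:ℂ)) ζ * (fun ζ => eval ζ Fc) ζ := rfl
    rw [h0, Multiset.prod_map_mul, Multiset.map_const', Multiset.prod_replicate, hcard]
  -- main complex equation
  have hC : (n:ℂ) * (((L':ℕ):ℂ) ^ (n-1) + (p:ℂ) * T)
      = ((L':ℕ):ℂ) ^ (n-1) * (n:ℂ) ^ (n-1) * ((r:ℚ):ℂ) ^ 2 := by
    rw [← hTe, hprod, hdisc, mul_pow]
    ring
  -- T is rational
  have hnne : ((n:ℕ):ℂ) ≠ 0 := by exact_mod_cast (by omega : n ≠ 0)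
  have hpne : ((p:ℕ):ℂ) ≠ 0 := by exact_mod_cast (by omega : p ≠ 0)
  have hTrat : ((((L'^(n-1) * n^(n-1) : ℕ) * r^2 - (n * L'^(n-1) : ℕ)) / ((p * n : ℕ)) : ℚ) : ℂ) = T := by
    have hden : (((p * n : ℕ) : ℚ) : ℂ) ≠ 0 := by
      push_cast
      exact mul_ne_zero (by exact_mod_cast hpne) (by exact_mod_cast hnne)
    rw [Rat.cast_div, div_eq_iff hden]
    push_cast
    push_cast at hC
    linear_combination -hC
  obtain ⟨z, hz⟩ := rat_algInt _ (hTrat ▸ hT)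
  -- rational equation
  have hdenQ : ((p * n : ℕ) : ℚ) ≠ 0 := by
    have : (p * n : ℕ) ≠ 0 := by positivity
    exact_mod_cast this
  rw [eq_div_iff hdenQ] at hz
  -- hz : (z:ℚ) * (p*n) = L'^(n-1)*n^(n-1)*r^2 - n*L'^(n-1)
  have hr2 : (r:ℚ)^2 * ((r.den:ℚ))^2 = ((r.num:ℚ))^2 := by
    rw [← mul_pow, Rat.mul_den_eq_num]
  have key : ((L'^(n-1) * n^(n-1) : ℕ):ℚ) * ((r.num:ℚ))^2
      = ((n * L'^(n-1) : ℕ):ℚ) * ((r.den:ℚ))^2 + ((p*n:ℕ):ℚ) * (z:ℚ) * ((r.den:ℚ))^2 := by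
    linear_combination (-((r.den:ℚ))^2) * hz - ((L'^(n-1) * n^(n-1) : ℕ):ℚ) * hr2
  have hZ : ((L':ℤ)^(n-1) * (n:ℤ)^(n-1)) * r.num^2
      = ((n:ℤ) * (L':ℤ)^(n-1)) * (r.den:ℤ)^2 + ((p:ℤ)*(n:ℤ)) * z * (r.den:ℤ)^2 := by
    exact_mod_cast key
  have hpow : (n:ℤ)^(n-1) = (n:ℤ) * (n:ℤ)^(n-2) := by
    rw [← pow_succ']
    congr 1
    omega
  have hnzZ : (n:ℤ) ≠ 0 := by exact_mod_cast (by omega : n ≠ 0)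
  have hcancel : ((L':ℤ)^(n-1) * (n:ℤ)^(n-2)) * r.num^2
      = ((L':ℤ)^(n-1) + (p:ℤ) * z) * (r.den:ℤ)^2 := by
    apply mul_left_cancel₀ hnzZ
    linear_combination hZ - ((L':ℤ)^(n-1) * r.num^2) * hpow
  -- pass to natAbs
  have hNat : L'^(n-1) * n^(n-2) * r.num.natAbs^2
      = ((L':ℤ)^(n-1) + (p:ℤ) * z).natAbs * r.den^2 := by
    have h := congrArg Int.natAbs hcancel
    simpa [Int.natAbs_mul, Int.natAbs_pow] using h
  set c : ℕ := ((L':ℤ)^(n-1) + (p:ℤ) * z).natAbs with hc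
  have hpc : ¬ p ∣ c := by
    intro hdvd
    have h1 : (p:ℤ) ∣ ((L':ℤ)^(n-1) + (p:ℤ) * z) := by
      rw [Int.natCast_dvd]
      exact hdvd
    have h2 : (p:ℤ) ∣ (L':ℤ)^(n-1) := by
      have := dvd_sub h1 (Dvd.intro z rfl)
      simpa using this
    have h3 : p ∣ L'^(n-1) := by exact_mod_cast h2
    exact hL'p (hp.dvd_of_dvd_pow h3)
  have hc0 : c ≠ 0 := fun h => hpc (h ▸ dvd_zero p)
  have hden0 : r.den ≠ 0 := r.den_nz
  have ha0 : r.num.natAbs ≠ 0 := by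
    intro h
    have h0 : c * r.den^2 = 0 := by
      rw [h] at hNat
      simpa using hNat.symm
    exact (mul_ne_zero hc0 (pow_ne_zero 2 hden0)) h0
  -- factorization at p
  have hfac := congrArg (fun m : ℕ => m.factorization p) hNat
  simp only [Nat.factorization_mul (by positivity : L'^(n-1) * n^(n-2) ≠ 0) (by positivity : r.num.natAbs^2 ≠ 0),
    Nat.factorization_mul (by positivity : L'^(n-1) ≠ 0) (by positivity : n^(n-2) ≠ 0),
    Nat.factorization_mul hc0 (by positivity : r.den^2 ≠ 0),
    Nat.factorization_pow, Finsupp.add_apply, Finsupp.smul_apply, smul_eq_mul] at hfac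
  have hfL' : L'.factorization p = 0 := Nat.factorization_eq_zero_of_not_dvd hL'p
  have hfc : c.factorization p = 0 := Nat.factorization_eq_zero_of_not_dvd hpc
  have hfn : n.factorization p = e := by
    rw [hn, hp.factorization_pow, Finsupp.single_eq_same]
  rw [hfL', hfc, hfn] at hfac
  -- parity contradiction
  have hoddE : Odd ((n-2) * e) := by
    refine Odd.mul ?_ heo
    obtain ⟨k, hk⟩ := hodd
    exact ⟨k-1, by omega⟩
  obtain ⟨j, hj⟩ := hoddE
  omega
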